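/- Let (U^n_τ) solve the viscous incremental minimization scheme with ℰ(0,U^0_τ) + d(x_o,U^0_τ) + F_o ≤ C_0, and suppose |P(t,x)| ≤ C_P(ℰ(t,x) + d(x_o,x) + F_o). Then ℰ(t^n_τ, U^n_τ) + d(x_o, U^n_τ) + F_o ≤ C_0 e^{C_P t^n_τ} for every n, and ∑_{j=1}^N [D(U^{j−1}_τ, U^j_τ) + R(t^j_τ, U^{j−1}_τ)] ≤ C_0 e^{C_P T} + C_1, where C_1 is any bound for d(x_o, U^n_τ) over n. -/

import Mathlib

open Set MeasureTheory Finset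

lemma my_gron_helper {a C : ℝ} (s : ℝ) (k : ℕ) :
    ∫ r in a..s, C * ((C*(r-a))^k / (k.factorial : ℝ)) =
      (C*(s-a))^(k+1) / ((k+1).factorial : ℝ) := by
  have h : ∀ r ∈ Set.uIcc a s, HasDerivAt (fun r => (C*(r-a))^(k+1) / ((k+1).factorial : ℝ))
      (C * ((C*(r-a))^k / (k.factorial : ℝ))) r := by
    intro r _
    have h1 : HasDerivAt (fun r => C*(r-a)) C r := by
      simpa using ((hasDerivAt_id r).sub_const a).const_mul C
    have h2 := (h1.pow (k+1)).div_const ((k+1).factorial : ℝ)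
    refine h2.congr_deriv ?_
    have : ((k+1).factorial : ℝ) = (k+1) * (k.factorial : ℝ) := by
      rw [Nat.factorial_succ]; push_cast; ring
    rw [this, Nat.add_sub_cancel]
    have hk : (k.factorial : ℝ) ≠ 0 := by positivity
    field_simp
    push_cast
    ring
  rw [intervalIntegral.integral_eq_sub_of_hasDerivAt h
    (by apply Continuous.intervalIntegrable; fun_prop)]
  simp

lemma my_gronwall {f : ℝ → ℝ} {a b C K : ℝ} (hab : a ≤ b) (hC : 0 ≤ C) (hK : 0 ≤ K)
    (hf : ContinuousOn f (Set.Icc a b)) (hnn : ∀ s ∈ Set.Icc a b, 0 ≤ f s)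
    (hb : ∀ s ∈ Set.Icc a b, f s ≤ K + C * ∫ r in a..s, f r) :
    ∀ s ∈ Set.Icc a b, f s ≤ K * Real.exp (C * (s - a)) := by
  obtain ⟨M, hM⟩ := isCompact_Icc.exists_bound_of_continuousOn hf
  have claim : ∀ n : ℕ, ∀ s ∈ Set.Icc a b,
      f s ≤ K * ∑ k ∈ range n, (C*(s-a))^k / (k.factorial : ℝ)
            + M * ((C*(s-a))^n / (n.factorial : ℝ)) := by
    intro n
    induction n with
    | zero =>
      intro s hs
      simpa using (le_abs_self (f s)).trans (hM s hs)
    | succ n ih =>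
      intro s hs
      have has : a ≤ s := hs.1
      have hint_f : IntervalIntegrable f volume a s :=
        (hf.mono (Set.Icc_subset_Icc_right hs.2)).intervalIntegrable_of_Icc has
      have hint_g : IntervalIntegrable (fun r =>
          K * ∑ k ∈ range n, (C*(r-a))^k / (k.factorial : ℝ)
          + M * ((C*(r-a))^n / (n.factorial : ℝ))) volume a s := by
        apply Continuous.intervalIntegrable; fun_prop
      have hmono : (∫ r in a..s, f r) ≤ ∫ r in a..s,
          (K * ∑ k ∈ range n, (C*(r-a))^k / (k.factorial : ℝ)
           + M * ((C*(r-a))^n / (n.factorial : ℝ))) := by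
        apply intervalIntegral.integral_mono_on has hint_f hint_g
        intro r hr
        exact ih r ⟨hr.1, hr.2.trans hs.2⟩
      have key : C * ∫ r in a..s,
          (K * ∑ k ∈ range n, (C*(r-a))^k / (k.factorial : ℝ)
           + M * ((C*(r-a))^n / (n.factorial : ℝ)))
          = K * ∑ k ∈ range n, (C*(s-a))^(k+1) / ((k+1).factorial : ℝ)
            + M * ((C*(s-a))^(n+1) / ((n+1).factorial : ℝ)) := by
        rw [← intervalIntegral.integral_const_mul]
        have : ∀ r : ℝ, C * (K * ∑ k ∈ range n, (C*(r-a))^k / (k.factorial : ℝ)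
            + M * ((C*(r-a))^n / (n.factorial : ℝ)))
            = (∑ k ∈ range n, K * (C * ((C*(r-a))^k / (k.factorial : ℝ))))
              + M * (C * ((C*(r-a))^n / (n.factorial : ℝ))) := by
          intro r
          simp_rw [← mul_assoc]
          rw [← Finset.mul_sum]
          ring
        simp_rw [this]
        rw [intervalIntegral.integral_add (by apply Continuous.intervalIntegrable; fun_prop)
          (by apply Continuous.intervalIntegrable; fun_prop),
          intervalIntegral.integral_finset_sum (fun k _ => by
            apply Continuous.intervalIntegrable; fun_prop)]
        have e1 : ∀ k : ℕ, (∫ x in a..s, K * (C * ((C*(x-a))^k / (k.factorial:ℝ))))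
            = K * ((C*(s-a))^(k+1)/((k+1).factorial:ℝ)) := fun k => by
          rw [intervalIntegral.integral_const_mul, my_gron_helper]
        have e2 : (∫ x in a..s, M * (C * ((C*(x-a))^n / (n.factorial:ℝ))))
            = M * ((C*(s-a))^(n+1)/((n+1).factorial:ℝ)) := by
          rw [intervalIntegral.integral_const_mul, my_gron_helper]
        simp only [e1, e2]
        rw [← Finset.mul_sum]
      have := hb s hs
      calc f s ≤ K + C * ∫ r in a..s, f r := hb s hs
        _ ≤ K + (K * ∑ k ∈ range n, (C*(s-a))^(k+1) / ((k+1).factorial : ℝ)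
            + M * ((C*(s-a))^(n+1) / ((n+1).factorial : ℝ))) := by
            rw [← key]; exact add_le_add le_rfl (mul_le_mul_of_nonneg_left hmono hC)
        _ = K * ∑ k ∈ range (n+1), (C*(s-a))^k / (k.factorial : ℝ)
            + M * ((C*(s-a))^(n+1) / ((n+1).factorial : ℝ)) := by
            rw [Finset.sum_range_succ']
            simp only [pow_zero, Nat.factorial_zero, Nat.cast_one, div_one]
            ring
  intro s hs
  have hx : 0 ≤ C * (s - a) := mul_nonneg hC (by linarith [hs.1])
  have hlim : Filter.Tendsto (fun n : ℕ => K * Real.exp (C*(s-a)) + M * ((C*(s-a))^n / (n.factorial : ℝ)))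
      Filter.atTop (nhds (K * Real.exp (C*(s-a)))) := by
    have := (FloorSemiring.tendsto_pow_div_factorial_atTop (C*(s-a))).const_mul M
    simpa using Filter.Tendsto.const_add (K * Real.exp (C*(s-a))) this
  refine ge_of_tendsto hlim (Filter.Eventually.of_forall fun n => ?_)
  calc f s ≤ K * ∑ k ∈ range n, (C*(s-a))^k / (k.factorial : ℝ)
        + M * ((C*(s-a))^n / (n.factorial : ℝ)) := claim n s hs
    _ ≤ K * Real.exp (C*(s-a)) + M * ((C*(s-a))^n / (n.factorial : ℝ)) := by
        gcongr
        exact Real.sum_le_exp_of_nonneg hx n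

/-- a priori estimates for the viscous incremental minimization scheme:
uniform bound on the perturbed energy `F(t,x) = E(t,x) + d(x_o,x) + F_o` and
on the total dissipation plus residual sum. -/
theorem stmt14 {X : Type*} (T : ℝ) (hT : 0 < T) (E : ℝ → X → ℝ)
    (d δ : X → X → ℝ) (x_o : X)
    (hdnn : ∀ x y, 0 ≤ d x y) (hd0 : ∀ x, d x x = 0)
    (htri : ∀ x y z, d x z ≤ d x y + d y z)
    (hδnn : ∀ x y, 0 ≤ δ x y) (hδ0 : ∀ x, δ x x = 0)
    (D : X → X → ℝ) (hD : ∀ x y, D x y = d x y + δ x y)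
    (Y : ℝ → X → ℝ)
    (hY : ∀ t x, (∃ y, E t y + D x y = Y t x) ∧ ∀ z, Y t x ≤ E t z + D x z)
    (R : ℝ → X → ℝ) (hR : ∀ t x, R t x = E t x - Y t x)
    (P : ℝ → X → ℝ) (C_P F_o C_0 C_1 : ℝ) (hCP : 0 < C_P) (hFo : 0 ≤ F_o)
    (hFnn : ∀ t ∈ Icc (0:ℝ) T, ∀ x, 0 ≤ E t x + d x_o x + F_o)
    (hpow : ∀ t ∈ Icc (0:ℝ) T, ∀ x, |P t x| ≤ C_P * (E t x + d x_o x + F_o))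
    (hinteg : ∀ x t₀ t₁, IntervalIntegrable (fun s => P s x) volume t₀ t₁)
    (hPint : ∀ x : X, ∀ s t : ℝ, E t x - E s x = ∫ r in s..t, P r x)
    (N : ℕ) (t : ℕ → ℝ) (ht : StrictMonoOn t (Set.Iic N))
    (ht0 : t 0 = 0) (htN : t N = T)
    (U : ℕ → X)
    (hinit : E (t 0) (U 0) + d x_o (U 0) + F_o ≤ C_0)
    (hmin : ∀ n : ℕ, 1 ≤ n → n ≤ N → ∀ V : X,
      E (t n) (U n) + d (U (n-1)) (U n) + δ (U (n-1)) (U n) ≤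
        E (t n) V + d (U (n-1)) V + δ (U (n-1)) V)
    (hC1 : ∀ n ≤ N, d x_o (U n) ≤ C_1) :
    (∀ n ≤ N, E (t n) (U n) + d x_o (U n) + F_o ≤ C_0 * Real.exp (C_P * t n)) ∧
    ∑ j ∈ Finset.Icc 1 N, (D (U (j-1)) (U j) + R (t j) (U (j-1))) ≤
      C_0 * Real.exp (C_P * T) + C_1 := by
  have hmemT : ∀ n : ℕ, n ≤ N → t n ∈ Icc (0:ℝ) T := by
    intro n hn
    have hmono := ht.monotoneOn
    constructor
    · calc (0:ℝ) = t 0 := ht0.symm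
        _ ≤ t n := hmono (by simp) (Set.mem_Iic.mpr hn) (Nat.zero_le n)
    · calc t n ≤ t N := hmono (Set.mem_Iic.mpr hn) (by simp) hn
        _ = T := htN
  -- Gronwall estimate for the perturbed energy along a fixed state
  have key : ∀ (x : X) (a b : ℝ), 0 ≤ a → a ≤ b → b ≤ T → ∀ s ∈ Icc a b,
      E s x + d x_o x + F_o ≤ (E a x + d x_o x + F_o) * Real.exp (C_P * (s - a)) := by
    intro x a b ha hab hbT
    have hfeq : ∀ s : ℝ, E s x + (d x_o x + F_o)
        = (E a x + (d x_o x + F_o)) + ∫ r in a..s, P r x := by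
      intro s; have := hPint x a s; linarith
    have hfun : (fun s : ℝ => E s x + (d x_o x + F_o))
        = fun s => (E a x + (d x_o x + F_o)) + ∫ r in a..s, P r x := funext fun s => hfeq s
    have hcont : ContinuousOn (fun s : ℝ => E s x + (d x_o x + F_o)) (Icc a b) := by
      rw [hfun]
      exact (continuous_const.add
        (intervalIntegral.continuous_primitive (fun u v => hinteg x u v) a)).continuousOn
    have hnn : ∀ s ∈ Icc a b, 0 ≤ E s x + (d x_o x + F_o) := by
      intro s hs
      have := hFnn s ⟨ha.trans hs.1, hs.2.trans hbT⟩ x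
      linarith
    have hbnd : ∀ s ∈ Icc a b, E s x + (d x_o x + F_o) ≤ (E a x + (d x_o x + F_o))
        + C_P * ∫ r in a..s, (E r x + (d x_o x + F_o)) := by
      intro s hs
      have h1 : IntervalIntegrable (fun r => E r x + (d x_o x + F_o)) volume a s :=
        (hcont.mono (Set.Icc_subset_Icc_right hs.2)).intervalIntegrable_of_Icc hs.1
      have h2 : (∫ r in a..s, P r x) ≤ ∫ r in a..s, C_P * (E r x + (d x_o x + F_o)) := by
        apply intervalIntegral.integral_mono_on hs.1 (hinteg x a s) (h1.const_mul C_P)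
        intro r hr
        have hrT : r ∈ Icc (0:ℝ) T := ⟨ha.trans hr.1, (hr.2.trans hs.2).trans hbT⟩
        calc P r x ≤ |P r x| := le_abs_self _
          _ ≤ C_P * (E r x + d x_o x + F_o) := hpow r hrT x
          _ = C_P * (E r x + (d x_o x + F_o)) := by rw [add_assoc]
      rw [intervalIntegral.integral_const_mul] at h2
      have := hfeq s
      linarith
    have hK : 0 ≤ E a x + (d x_o x + F_o) := hnn a ⟨le_refl a, hab⟩
    have hG := my_gronwall hab hCP.le hK hcont hnn hbnd
    intro s hs
    have := hG s hs
    linarith [mul_le_mul_of_nonneg_right (le_refl (E a x + (d x_o x + F_o)))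
      (Real.exp_pos (C_P * (s-a))).le, show (E a x + (d x_o x + F_o)) * Real.exp (C_P * (s - a))
      = (E a x + d x_o x + F_o) * Real.exp (C_P * (s - a)) from by rw [add_assoc]]
  -- one-step comparison from minimality
  have stepF : ∀ n : ℕ, n + 1 ≤ N →
      E (t (n+1)) (U (n+1)) + d x_o (U (n+1)) + F_o
        ≤ E (t (n+1)) (U n) + d x_o (U n) + F_o := by
    intro n hn
    have h := hmin (n+1) (Nat.le_add_left 1 n) hn (U n)
    simp only [Nat.add_sub_cancel] at h
    rw [hd0, hδ0] at h
    have h2 := htri x_o (U n) (U (n+1))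
    have h3 := hδnn (U n) (U (n+1))
    linarith
  -- the uniform energy bound, by induction on n
  have energy : ∀ n : ℕ, n ≤ N → E (t n) (U n) + d x_o (U n) + F_o
      ≤ C_0 * Real.exp (C_P * t n) := by
    intro n
    induction n with
    | zero =>
      intro _
      have he : C_P * t 0 = 0 := by rw [ht0]; ring
      rw [he, Real.exp_zero, mul_one]
      exact hinit
    | succ n ih =>
      intro hn
      have hn' : n ≤ N := Nat.le_of_succ_le hn
      have ha := (hmemT n hn').1
      have hb' := (hmemT (n+1) hn).2
      have hab := le_of_lt (ht (Set.mem_Iic.mpr hn') (Set.mem_Iic.mpr hn) (Nat.lt_succ_self n))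
      calc E (t (n+1)) (U (n+1)) + d x_o (U (n+1)) + F_o
          ≤ E (t (n+1)) (U n) + d x_o (U n) + F_o := stepF n hn
        _ ≤ (E (t n) (U n) + d x_o (U n) + F_o) * Real.exp (C_P * (t (n+1) - t n)) :=
            key (U n) (t n) (t (n+1)) ha hab hb' (t (n+1)) ⟨hab, le_refl _⟩
        _ ≤ (C_0 * Real.exp (C_P * t n)) * Real.exp (C_P * (t (n+1) - t n)) :=
            mul_le_mul_of_nonneg_right (ih hn') (Real.exp_pos _).le
        _ = C_0 * Real.exp (C_P * t (n+1)) := by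
            rw [mul_assoc, ← Real.exp_add]; ring_nf
  refine ⟨energy, ?_⟩
  -- identification of Y at the minimizer
  have hYeq : ∀ j : ℕ, 1 ≤ j → j ≤ N →
      Y (t j) (U (j-1)) = E (t j) (U j) + D (U (j-1)) (U j) := by
    intro j h1 hj
    refine le_antisymm ((hY (t j) (U (j-1))).2 (U j)) ?_
    obtain ⟨y, hy⟩ := (hY (t j) (U (j-1))).1
    rw [← hy, hD, hD]
    have := hmin j h1 hj y
    linarith
  -- per-step integral bound
  have hIb : ∀ n : ℕ, n + 1 ≤ N →
      (∫ s in (t n)..(t (n+1)), P s (U n))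
        ≤ C_0 * Real.exp (C_P * t (n+1)) - C_0 * Real.exp (C_P * t n) := by
    intro n hn
    have hn' : n ≤ N := Nat.le_of_succ_le hn
    have ha := (hmemT n hn').1
    have hb' := (hmemT (n+1) hn).2
    have hab := le_of_lt (ht (Set.mem_Iic.mpr hn') (Set.mem_Iic.mpr hn) (Nat.lt_succ_self n))
    have hptw : ∀ s ∈ Icc (t n) (t (n+1)), P s (U n) ≤ C_P * (C_0 * Real.exp (C_P * s)) := by
      intro s hs
      have hsT : s ∈ Icc (0:ℝ) T := ⟨ha.trans hs.1, hs.2.trans hb'⟩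
      have h4 : E s (U n) + d x_o (U n) + F_o ≤ C_0 * Real.exp (C_P * s) := by
        calc E s (U n) + d x_o (U n) + F_o
            ≤ (E (t n) (U n) + d x_o (U n) + F_o) * Real.exp (C_P * (s - t n)) :=
              key (U n) (t n) (t (n+1)) ha hab hb' s hs
          _ ≤ (C_0 * Real.exp (C_P * t n)) * Real.exp (C_P * (s - t n)) :=
              mul_le_mul_of_nonneg_right (energy n hn') (Real.exp_pos _).le
          _ = C_0 * Real.exp (C_P * s) := by rw [mul_assoc, ← Real.exp_add]; ring_nf
      calc P s (U n) ≤ |P s (U n)| := le_abs_self _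
        _ ≤ C_P * (E s (U n) + d x_o (U n) + F_o) := hpow s hsT (U n)
        _ ≤ C_P * (C_0 * Real.exp (C_P * s)) := mul_le_mul_of_nonneg_left h4 hCP.le
    have hint2 : IntervalIntegrable (fun s => C_P * (C_0 * Real.exp (C_P * s)))
        volume (t n) (t (n+1)) := by
      apply Continuous.intervalIntegrable; fun_prop
    have hmono := intervalIntegral.integral_mono_on hab (hinteg (U n) _ _) hint2 hptw
    have hcomp : (∫ s in (t n)..(t (n+1)), C_P * (C_0 * Real.exp (C_P * s)))
        = C_0 * Real.exp (C_P * t (n+1)) - C_0 * Real.exp (C_P * t n) := by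
      have hder : ∀ s ∈ Set.uIcc (t n) (t (n+1)),
          HasDerivAt (fun s => C_0 * Real.exp (C_P * s)) (C_P * (C_0 * Real.exp (C_P * s))) s := by
        intro s _
        have h1 : HasDerivAt (fun s : ℝ => C_P * s) C_P s := by
          simpa using (hasDerivAt_id s).const_mul C_P
        have h2 := h1.exp.const_mul C_0
        refine h2.congr_deriv ?_
        ring
      rw [intervalIntegral.integral_eq_sub_of_hasDerivAt hder
        (by apply Continuous.intervalIntegrable; fun_prop)]
    linarith
  -- rewrite the sum
  have sum_eq : ∑ j ∈ Finset.Icc 1 N, (D (U (j-1)) (U j) + R (t j) (U (j-1)))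
      = ∑ i ∈ Finset.range N, (E (t (i+1)) (U i) - E (t (i+1)) (U (i+1))) := by
    rw [← Finset.Ico_add_one_right_eq_Icc, Finset.sum_Ico_eq_sum_range]
    apply Finset.sum_congr (by norm_num)
    intro i hi
    rw [show 1 + i = i + 1 from Nat.add_comm 1 i]
    simp only [Nat.add_sub_cancel]
    rw [hR]
    have hy := hYeq (i+1) (Nat.le_add_left 1 i) (Finset.mem_range.mp hi)
    simp only [Nat.add_sub_cancel] at hy
    rw [hy]
    ring
  rw [sum_eq]
  have decompose : ∑ i ∈ Finset.range N, (E (t (i+1)) (U i) - E (t (i+1)) (U (i+1)))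
      = (∑ i ∈ Finset.range N, ∫ s in (t i)..(t (i+1)), P s (U i))
        + ∑ i ∈ Finset.range N, (E (t i) (U i) - E (t (i+1)) (U (i+1))) := by
    rw [← Finset.sum_add_distrib]
    apply Finset.sum_congr rfl
    intro i _
    have := hPint (U i) (t i) (t (i+1))
    linarith
  have tele : ∑ i ∈ Finset.range N, (E (t i) (U i) - E (t (i+1)) (U (i+1)))
      = E (t 0) (U 0) - E (t N) (U N) := Finset.sum_range_sub' (fun i => E (t i) (U i)) N
  have S1 : (∑ i ∈ Finset.range N, ∫ s in (t i)..(t (i+1)), P s (U i))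
      ≤ C_0 * Real.exp (C_P * T) - C_0 := by
    calc (∑ i ∈ Finset.range N, ∫ s in (t i)..(t (i+1)), P s (U i))
        ≤ ∑ i ∈ Finset.range N, (C_0 * Real.exp (C_P * t (i+1)) - C_0 * Real.exp (C_P * t i)) :=
          Finset.sum_le_sum (fun i hi => hIb i (Finset.mem_range.mp hi))
      _ = C_0 * Real.exp (C_P * t N) - C_0 * Real.exp (C_P * t 0) :=
          Finset.sum_range_sub (fun i => C_0 * Real.exp (C_P * t i)) N
      _ = C_0 * Real.exp (C_P * T) - C_0 := by rw [htN, ht0]; simp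
  have hFN : 0 ≤ E (t N) (U N) + d x_o (U N) + F_o := hFnn (t N) (hmemT N le_rfl) (U N)
  have hdN := hC1 N le_rfl
  have hd0' := hdnn x_o (U 0)
  rw [decompose, tele]
  linarith
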